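/- Let N ≥ 2 and T ≥ 1 be integers with ln N < 2T, and let r_{i,t} ∈ [0,1] be arbitrary real rewards for i ∈ {1,…,N} and t ∈ {1,…,T}. Set ε = (1 − √(ln N/(2T)))^{-1}. Define weights w_1(i) = 1 and w_{t+1}(i) = w_t(i)·ε^{r_{i,t}} for t = 1,…,T−1, and probability vectors p_t(i) = w_t(i)/Σ_{j=1}^N w_t(j). Then max_{1≤i≤N} Σ_{t=1}^T r_{i,t} − Σ_{t=1}^T Σ_{i=1}^N p_t(i)·r_{i,t} ≤ 2√2·√(T·ln N). -/

import Mathlib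

open Finset

lemma rpow_le_linear {ε x : ℝ} (hε : 1 ≤ ε) (hx0 : 0 ≤ x) (hx1 : x ≤ 1) :
    ε ^ x ≤ 1 + (ε - 1) * x := by
  have hεpos : (0:ℝ) < ε := lt_of_lt_of_le one_pos hε
  have h := convexOn_exp.2 (Set.mem_univ (0:ℝ)) (Set.mem_univ (Real.log ε))
    (by linarith : (0:ℝ) ≤ 1 - x) hx0 (by ring)
  simp only [smul_eq_mul, mul_zero, zero_add, Real.exp_zero, Real.exp_log hεpos] at h
  rw [Real.rpow_def_of_pos hεpos]
  calc Real.exp (Real.log ε * x) = Real.exp (x * Real.log ε) := by ring_nf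
    _ ≤ (1 - x) * 1 + x * ε := h
    _ = 1 + (ε - 1) * x := by ring

set_option maxHeartbeats 2000000 in
/-- Deterministic full-information guarantee of the Hedge (multiplicative weights)
algorithm: the cumulative expected reward of the probability vectors `p` built from
exponentially updated weights is within `2√2·√(T·ln N)` of the best single action. -/
theorem hedge_regret_bound
    (N T : ℕ) (hN : 2 ≤ N) (hT : 1 ≤ T)
    (hlog : Real.log N < 2 * T)
    (r : ℕ → ℕ → ℝ)
    (hr : ∀ i < N, ∀ t < T, r i t ∈ Set.Icc (0 : ℝ) 1)
    (ε : ℝ) (hε : ε = (1 - Real.sqrt (Real.log N / (2 * T)))⁻¹)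
    (w : ℕ → ℕ → ℝ)
    (hw0 : ∀ i < N, w i 0 = 1)
    (hwsucc : ∀ i < N, ∀ t, t + 1 < T → w i (t + 1) = w i t * ε ^ (r i t))
    (p : ℕ → ℕ → ℝ)
    (hp : ∀ i < N, ∀ t < T, p i t = w i t / ∑ j ∈ Finset.range N, w j t) :
    (Finset.range N).sup' (by simp; omega) (fun i => ∑ t ∈ Finset.range T, r i t)
      - ∑ t ∈ Finset.range T, ∑ i ∈ Finset.range N, p i t * r i t
      ≤ 2 * Real.sqrt 2 * Real.sqrt (T * Real.log N) := by
  have hT0 : (0:ℝ) < T := by exact_mod_cast hT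
  have hN1 : (1:ℝ) < N := by exact_mod_cast (by omega : 1 < N)
  have hL : 0 < Real.log N := Real.log_pos hN1
  set L := Real.log N with hLdef
  set δ := Real.sqrt (L / (2 * T)) with hδdef
  have hfracpos : 0 < L / (2 * T) := div_pos hL (by positivity)
  have hδ0 : 0 < δ := Real.sqrt_pos.mpr hfracpos
  have hδsq : δ ^ 2 = L / (2 * T) := Real.sq_sqrt hfracpos.le
  have hδ1 : δ < 1 := by
    rw [hδdef, show (1:ℝ) = Real.sqrt 1 by simp]
    exact Real.sqrt_lt_sqrt hfracpos.le ((div_lt_one (by positivity)).mpr hlog)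
  have h1δ : 0 < 1 - δ := by linarith
  have hε1 : 1 < ε := by
    rw [hε]
    rw [lt_inv_comm₀ one_pos h1δ]
    simpa using hδ0
  have hεpos : (0:ℝ) < ε := lt_trans one_pos hε1
  have hLval : L = 2 * T * δ ^ 2 := by
    rw [hδsq]; field_simp
  -- right-hand side equals 4 T δ
  have hRHS : 2 * Real.sqrt 2 * Real.sqrt (T * L) = 4 * T * δ := by
    have hTL : (T:ℝ) * L = 2 * (T * δ) ^ 2 := by rw [hLval]; ring
    rw [hTL, Real.sqrt_mul (by norm_num : (0:ℝ) ≤ 2),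
      Real.sqrt_sq (by positivity : (0:ℝ) ≤ T * δ)]
    have h2 : Real.sqrt 2 * Real.sqrt 2 = 2 := Real.mul_self_sqrt (by norm_num)
    nlinarith [h2]
  -- cumulative rewards
  set G : ℕ → ℕ → ℝ := fun i t => ∑ s ∈ Finset.range t, r i s with hGdef
  have hwt : ∀ t < T, ∀ i < N, w i t = ε ^ (G i t) := by
    intro t
    induction t with
    | zero => intro _ i hi; simp [hGdef, hw0 i hi]
    | succ t ih =>
      intro ht i hi
      rw [hwsucc i hi t ht, ih (by omega) i hi, ← Real.rpow_add hεpos]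
      congr 1
      simp [hGdef, Finset.sum_range_succ]
  set W : ℕ → ℝ := fun t => ∑ j ∈ Finset.range N, ε ^ (G j t) with hWdef
  have hWpos : ∀ t, 0 < W t := fun t =>
    Finset.sum_pos (fun j _ => Real.rpow_pos_of_pos hεpos _)
      ⟨0, Finset.mem_range.mpr (by omega)⟩
  have hpf : ∀ t < T, ∀ i < N, p i t = ε ^ (G i t) / W t := by
    intro t ht i hi
    rw [hp i hi t ht, hwt t ht i hi]
    congr 1
    exact Finset.sum_congr rfl fun j hj => hwt t ht j (Finset.mem_range.mp hj)
  set g : ℕ → ℝ := fun t => ∑ i ∈ Finset.range N, p i t * r i t with hgdef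
  have hp0 : ∀ t < T, ∀ i < N, 0 ≤ p i t := by
    intro t ht i hi
    rw [hpf t ht i hi]
    exact div_nonneg (Real.rpow_pos_of_pos hεpos _).le (hWpos t).le
  have hpsum : ∀ t < T, ∑ i ∈ Finset.range N, p i t = 1 := by
    intro t ht
    rw [Finset.sum_congr rfl fun i hi => hpf t ht i (Finset.mem_range.mp hi),
      ← Finset.sum_div]
    exact div_self (hWpos t).ne'
  have hg0 : ∀ t < T, 0 ≤ g t := by
    intro t ht
    exact Finset.sum_nonneg fun i hi =>
      mul_nonneg (hp0 t ht i (Finset.mem_range.mp hi))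
        (hr i (Finset.mem_range.mp hi) t ht).1
  have hg1 : ∀ t < T, g t ≤ 1 := by
    intro t ht
    rw [← hpsum t ht]
    exact Finset.sum_le_sum fun i hi => by
      have := (hr i (Finset.mem_range.mp hi) t ht).2
      have h0 := hp0 t ht i (Finset.mem_range.mp hi)
      nlinarith
  -- key sum identity
  have hsumid : ∀ t < T, ∑ j ∈ Finset.range N, ε ^ (G j t) * r j t = W t * g t := by
    intro t ht
    have hgt : g t = ∑ i ∈ Finset.range N, (ε ^ G i t / W t) * r i t := by
      show ∑ i ∈ Finset.range N, p i t * r i t = _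
      exact Finset.sum_congr rfl fun i hi => by
        rw [hpf t ht i (Finset.mem_range.mp hi)]
    rw [hgt, Finset.mul_sum]
    refine Finset.sum_congr rfl fun i _ => ?_
    have hWne : W t ≠ 0 := (hWpos t).ne'
    field_simp
  -- one-step potential bound
  have hstep : ∀ t < T, W (t + 1) ≤ W t * Real.exp ((ε - 1) * g t) := by
    intro t ht
    have h1 : W (t + 1) = ∑ j ∈ Finset.range N, ε ^ (G j t) * ε ^ (r j t) := by
      rw [hWdef]
      exact Finset.sum_congr rfl fun j _ => by
        rw [← Real.rpow_add hεpos]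
        congr 1
        simp [hGdef, Finset.sum_range_succ]
    have h2 : W (t + 1) ≤ ∑ j ∈ Finset.range N, ε ^ (G j t) * (1 + (ε - 1) * r j t) := by
      rw [h1]
      refine Finset.sum_le_sum fun j hj => ?_
      have hj' := Finset.mem_range.mp hj
      exact mul_le_mul_of_nonneg_left
        (rpow_le_linear hε1.le (hr j hj' t ht).1 (hr j hj' t ht).2)
        (Real.rpow_pos_of_pos hεpos _).le
    have h3 : ∑ j ∈ Finset.range N, ε ^ (G j t) * (1 + (ε - 1) * r j t)
        = W t * (1 + (ε - 1) * g t) := by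
      have := hsumid t ht
      rw [hWdef]
      simp only [mul_add, mul_one, Finset.sum_add_distrib]
      rw [show ∑ j ∈ Finset.range N, ε ^ G j t * ((ε - 1) * r j t)
          = (ε - 1) * ∑ j ∈ Finset.range N, ε ^ G j t * r j t by
        rw [Finset.mul_sum]; exact Finset.sum_congr rfl fun j _ => by ring]
      rw [this]; ring
    have h4 : 1 + (ε - 1) * g t ≤ Real.exp ((ε - 1) * g t) := by
      have := Real.add_one_le_exp ((ε - 1) * g t); linarith
    calc W (t + 1) ≤ W t * (1 + (ε - 1) * g t) := by rw [← h3]; exact h2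
      _ ≤ W t * Real.exp ((ε - 1) * g t) :=
        mul_le_mul_of_nonneg_left h4 (hWpos t).le
  -- potential bound
  have hWT : ∀ t ≤ T, W t ≤ N * Real.exp ((ε - 1) * ∑ s ∈ Finset.range t, g s) := by
    intro t
    induction t with
    | zero =>
      intro _
      simp [hWdef, hGdef]
    | succ t ih =>
      intro ht
      have ht' : t < T := by omega
      calc W (t + 1) ≤ W t * Real.exp ((ε - 1) * g t) := hstep t ht'
        _ ≤ (N * Real.exp ((ε - 1) * ∑ s ∈ Finset.range t, g s)) * Real.exp ((ε - 1) * g t) :=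
          mul_le_mul_of_nonneg_right (ih (by omega)) (Real.exp_pos _).le
        _ = N * Real.exp ((ε - 1) * ∑ s ∈ Finset.range (t + 1), g s) := by
          rw [mul_assoc, ← Real.exp_add, Finset.sum_range_succ]; ring_nf
  -- best expert
  obtain ⟨i, hiN, hieq⟩ := Finset.exists_mem_eq_sup' (by simp; omega : (Finset.range N).Nonempty)
    (fun i => ∑ t ∈ Finset.range T, r i t)
  have hiN' : i < N := Finset.mem_range.mp hiN
  set S : ℝ := ∑ t ∈ Finset.range T, g t with hSdef
  rw [hieq]
  show G i T - S ≤ _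
  have hlow : ε ^ (G i T) ≤ W T := by
    show ε ^ (G i T) ≤ ∑ j ∈ Finset.range N, ε ^ (G j T)
    exact Finset.single_le_sum (f := fun j => ε ^ (G j T))
      (fun j _ => (Real.rpow_pos_of_pos hεpos _).le) hiN
  have hkey : G i T * Real.log ε ≤ L + (ε - 1) * S := by
    have h := Real.log_le_log (Real.rpow_pos_of_pos hεpos _) (le_trans hlow (hWT T le_rfl))
    rw [Real.log_rpow hεpos, Real.log_mul (by positivity) (Real.exp_pos _).ne',
      Real.log_exp] at h
    linarith
  have hS0 : 0 ≤ S := Finset.sum_nonneg fun t ht => hg0 t (Finset.mem_range.mp ht)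
  have hST : S ≤ T := by
    calc S ≤ ∑ t ∈ Finset.range T, (1:ℝ) :=
        Finset.sum_le_sum fun t ht => hg1 t (Finset.mem_range.mp ht)
      _ = T := by simp
  have hGT : G i T ≤ T := by
    calc G i T ≤ ∑ t ∈ Finset.range T, (1:ℝ) :=
        Finset.sum_le_sum fun t ht => (hr i hiN' t (Finset.mem_range.mp ht)).2
      _ = T := by simp
  rw [hRHS]
  -- log ε facts
  have hεval : ε - 1 = δ / (1 - δ) := by rw [hε]; field_simp; ring
  have hlε_ge : δ ≤ Real.log ε := by
    have h1 : 1 - δ ≤ Real.exp (-δ) := by have := Real.add_one_le_exp (-δ); linarith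
    have h2 : Real.log (1 - δ) ≤ -δ := by
      calc Real.log (1 - δ) ≤ Real.log (Real.exp (-δ)) := Real.log_le_log h1δ h1
        _ = -δ := Real.log_exp _
    rw [hε, Real.log_inv]
    linarith
  have hlε_le : Real.log ε ≤ ε - 1 := by
    have := Real.add_one_le_exp (Real.log ε)
    rw [Real.exp_log hεpos] at this
    linarith
  by_cases hcase : δ ≤ 1/4
  · -- main case
    rcases le_or_gt (G i T) S with h | h
    · have : 0 ≤ 4 * (T:ℝ) * δ := by positivity
      linarith
    · have hd : (G i T - S) * δ ≤ (G i T - S) * Real.log ε :=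
        mul_le_mul_of_nonneg_left hlε_ge (by linarith)
      have h2 : (G i T - S) * Real.log ε ≤ L + (ε - 1 - Real.log ε) * S := by nlinarith
      have h3 : ε - 1 - Real.log ε ≤ ε - 1 - δ := by linarith
      have h4 : ε - 1 - δ = δ ^ 2 / (1 - δ) := by rw [hεval]; field_simp; ring
      have h5 : δ ^ 2 / (1 - δ) ≤ (4/3) * δ ^ 2 := by
        rw [div_le_iff₀ h1δ]; nlinarith
      have h6 : 0 ≤ ε - 1 - Real.log ε := by linarith
      have h7 : (ε - 1 - Real.log ε) * S ≤ (4/3) * δ ^ 2 * T := by nlinarith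
      have h8 : (G i T - S) * δ ≤ 2 * T * δ ^ 2 + (4/3) * δ ^ 2 * T := by
        rw [hLval] at h2; linarith
      have h9 : (G i T - S) * δ ≤ 4 * T * δ * δ := by nlinarith
      exact le_of_mul_le_mul_right h9 hδ0
  · -- trivial case: δ ≥ 1/4, regret ≤ T ≤ 4 T δ
    push_neg at hcase
    calc G i T - S ≤ T - 0 := by linarith
      _ = T := by ring
      _ ≤ 4 * T * δ := by nlinarith
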